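/- For every n ≥ 1 and every d ≥ 0: the number of permutations in C_{2n+1}(123) with exactly d descents equals the number of 123-avoiding permutations of {1,…,n} with exactly (d−2)/2 descents if d is even and d ≥ 2, and equals 0 if d is odd or d = 0. -/

import Mathlib

/-- The value of the permutation `σ` of `{1,…,N}` (modeled on `Fin N`) at a
1-indexed position `i` (so `pval σ i ∈ {1,…,N}` for `1 ≤ i ≤ N`). -/
def pval {N : ℕ} (σ : Equiv.Perm (Fin N)) (i : ℕ) : ℕ :=
  if h : i - 1 < N then ((σ ⟨i - 1, h⟩ : ℕ) + 1) else 0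

/-- `σ` is centrosymmetric: `σ(i) + σ(N+1−i) = N+1` for all `1 ≤ i ≤ N`. -/
def IsCentro {N : ℕ} (σ : Equiv.Perm (Fin N)) : Prop :=
  ∀ i, 1 ≤ i → i ≤ N → pval σ i + pval σ (N + 1 - i) = N + 1

/-- `σ` avoids the pattern 132. -/
def Avoids132 {N : ℕ} (σ : Equiv.Perm (Fin N)) : Prop :=
  ¬ ∃ i j k, 1 ≤ i ∧ i < j ∧ j < k ∧ k ≤ N ∧
    pval σ i < pval σ k ∧ pval σ k < pval σ j

/-- `σ` avoids the pattern 123. -/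
def Avoids123 {N : ℕ} (σ : Equiv.Perm (Fin N)) : Prop :=
  ¬ ∃ i j k, 1 ≤ i ∧ i < j ∧ j < k ∧ k ≤ N ∧
    pval σ i < pval σ j ∧ pval σ j < pval σ k

/-- The number of descents of `σ`: positions `1 ≤ i ≤ N−1` with `σ(i) > σ(i+1)`. -/
noncomputable def des {N : ℕ} (σ : Equiv.Perm (Fin N)) : ℕ :=
  Nat.card {i : ℕ // 1 ≤ i ∧ i + 1 ≤ N ∧ pval σ (i + 1) < pval σ i}

lemma pval_def {N : ℕ} (σ : Equiv.Perm (Fin N)) {i : ℕ} (h : i - 1 < N) :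
    pval σ i = (σ ⟨i - 1, h⟩ : ℕ) + 1 := by rw [pval, dif_pos h]

lemma pval_pos {N : ℕ} (σ : Equiv.Perm (Fin N)) {i : ℕ} (h1 : 1 ≤ i) (h2 : i ≤ N) :
    1 ≤ pval σ i := by
  rw [pval_def σ (show i - 1 < N by omega)]; omega

lemma pval_le {N : ℕ} (σ : Equiv.Perm (Fin N)) {i : ℕ} (h1 : 1 ≤ i) (h2 : i ≤ N) :
    pval σ i ≤ N := by
  have h : i - 1 < N := by omega
  rw [pval_def σ h]
  have := (σ ⟨i - 1, h⟩).isLt; omega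

lemma pval_inj {N : ℕ} (σ : Equiv.Perm (Fin N)) {i j : ℕ} (h1 : 1 ≤ i) (h2 : i ≤ N)
    (h3 : 1 ≤ j) (h4 : j ≤ N) (h : pval σ i = pval σ j) : i = j := by
  have hi : i - 1 < N := by omega
  have hj : j - 1 < N := by omega
  rw [pval_def σ hi, pval_def σ hj] at h
  have heq : σ ⟨i-1, hi⟩ = σ ⟨j-1, hj⟩ := Fin.ext (by omega)
  have h5 : i - 1 = j - 1 := congrArg Fin.val (σ.injective heq)
  omega

def embFun (n : ℕ) (τ : Equiv.Perm (Fin n)) (x : Fin (2*n+1)) : Fin (2*n+1) :=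
  if h : (x : ℕ) < n then ⟨n + 1 + τ ⟨x, h⟩, by have := (τ ⟨x, h⟩).isLt; omega⟩
  else if h2 : (x : ℕ) = n then ⟨n, by omega⟩
  else ⟨n - 1 - (τ ⟨2*n - x, by have := x.isLt; omega⟩ : ℕ), by omega⟩

lemma embFun_inj (n : ℕ) (τ : Equiv.Perm (Fin n)) : Function.Injective (embFun n τ) := by
  intro a b hab
  have hv := congrArg Fin.val hab
  unfold embFun at hv
  have ha := a.isLt; have hb := b.isLt
  by_cases h1 : (a:ℕ) < n <;> by_cases h2 : (b:ℕ) < n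
  · rw [dif_pos h1, dif_pos h2] at hv
    simp only [Fin.val_mk] at hv
    have hval : τ ⟨(a:ℕ), h1⟩ = τ ⟨(b:ℕ), h2⟩ := Fin.ext (by omega)
    have h3 := congrArg Fin.val (τ.injective hval)
    simp only [Fin.val_mk] at h3
    exact Fin.ext h3
  · rw [dif_pos h1, dif_neg h2] at hv
    by_cases h3 : (b:ℕ) = n
    · rw [dif_pos h3] at hv; simp only [Fin.val_mk] at hv; omega
    · rw [dif_neg h3] at hv; simp only [Fin.val_mk] at hv; omega
  · rw [dif_neg h1, dif_pos h2] at hv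
    by_cases h3 : (a:ℕ) = n
    · rw [dif_pos h3] at hv; simp only [Fin.val_mk] at hv; omega
    · rw [dif_neg h3] at hv; simp only [Fin.val_mk] at hv; omega
  · rw [dif_neg h1, dif_neg h2] at hv
    by_cases h3 : (a:ℕ) = n <;> by_cases h4 : (b:ℕ) = n
    · exact Fin.ext (by omega)
    · rw [dif_pos h3, dif_neg h4] at hv; simp only [Fin.val_mk] at hv
      have := (τ ⟨2*n - (b:ℕ), by omega⟩).isLt; omega
    · rw [dif_neg h3, dif_pos h4] at hv; simp only [Fin.val_mk] at hv
      have := (τ ⟨2*n - (a:ℕ), by omega⟩).isLt; omega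
    · rw [dif_neg h3, dif_neg h4] at hv; simp only [Fin.val_mk] at hv
      have ht1 := (τ ⟨2*n - (a:ℕ), by omega⟩).isLt
      have ht2 := (τ ⟨2*n - (b:ℕ), by omega⟩).isLt
      have hval : τ ⟨2*n - (a:ℕ), by omega⟩ = τ ⟨2*n - (b:ℕ), by omega⟩ := Fin.ext (by omega)
      have h5 := congrArg Fin.val (τ.injective hval)
      simp only [Fin.val_mk] at h5
      exact Fin.ext (by omega)

noncomputable def emb (n : ℕ) (τ : Equiv.Perm (Fin n)) : Equiv.Perm (Fin (2*n+1)) :=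
  Equiv.ofBijective (embFun n τ) (Finite.injective_iff_bijective.mp (embFun_inj n τ))

lemma emb_apply (n : ℕ) (τ : Equiv.Perm (Fin n)) (x : Fin (2*n+1)) :
    emb n τ x = embFun n τ x := rfl

lemma pval_emb_low (n : ℕ) (τ : Equiv.Perm (Fin n)) {i : ℕ} (h1 : 1 ≤ i) (h2 : i ≤ n) :
    pval (emb n τ) i = n + 1 + pval τ i := by
  have hlt : i - 1 < 2*n+1 := by omega
  have hlt2 : i - 1 < n := by omega
  rw [pval_def _ hlt, pval_def τ hlt2, emb_apply]
  unfold embFun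
  rw [dif_pos (show ((⟨i-1, hlt⟩ : Fin (2*n+1)) : ℕ) < n from hlt2)]
  simp only [Fin.val_mk]
  omega

lemma pval_emb_mid (n : ℕ) (τ : Equiv.Perm (Fin n)) :
    pval (emb n τ) (n+1) = n+1 := by
  have hlt : n + 1 - 1 < 2*n+1 := by omega
  rw [pval_def _ hlt, emb_apply]
  unfold embFun
  rw [dif_neg (show ¬ ((⟨n+1-1, hlt⟩ : Fin (2*n+1)) : ℕ) < n by simp)]
  rw [dif_pos (show ((⟨n+1-1, hlt⟩ : Fin (2*n+1)) : ℕ) = n by simp)]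

lemma pval_emb_high (n : ℕ) (τ : Equiv.Perm (Fin n)) {i : ℕ} (h1 : n+2 ≤ i) (h2 : i ≤ 2*n+1) :
    pval (emb n τ) i = n + 1 - pval τ (2*n+2-i) := by
  have hlt : i - 1 < 2*n+1 := by omega
  have hlt2 : 2*n+2-i - 1 < n := by omega
  rw [pval_def _ hlt, pval_def τ hlt2, emb_apply]
  unfold embFun
  rw [dif_neg (show ¬ ((⟨i-1, hlt⟩ : Fin (2*n+1)) : ℕ) < n by simp; omega)]
  rw [dif_neg (show ¬ ((⟨i-1, hlt⟩ : Fin (2*n+1)) : ℕ) = n by simp; omega)]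
  simp only [Fin.val_mk]
  have hidx : 2*n - (i-1) = 2*n+2-i-1 := by omega
  have := (τ ⟨2*n+2-i-1, hlt2⟩).isLt
  rw [show (⟨2*n - (i-1), by omega⟩ : Fin n) = ⟨2*n+2-i-1, hlt2⟩ from Fin.ext hidx]
  omega

lemma centro_emb (n : ℕ) (τ : Equiv.Perm (Fin n)) : IsCentro (emb n τ) := by
  intro i h1 h2
  rcases show i ≤ n ∨ i = n + 1 ∨ n + 2 ≤ i by omega with h | h | h
  · have hb1 := pval_pos τ h1 h
    have hb2 := pval_le τ h1 h
    rw [pval_emb_low n τ h1 h,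
        pval_emb_high n τ (show n+2 ≤ 2*n+1+1-i by omega) (show 2*n+1+1-i ≤ 2*n+1 by omega),
        show 2*n+2-(2*n+1+1-i) = i by omega]
    omega
  · subst h
    rw [show 2*n+1+1-(n+1) = n+1 by omega, pval_emb_mid]
    omega
  · have hj1 : 1 ≤ 2*n+2-i := by omega
    have hj2 : 2*n+2-i ≤ n := by omega
    have hb1 := pval_pos τ hj1 hj2
    have hb2 := pval_le τ hj1 hj2
    rw [pval_emb_high n τ h h2,
        pval_emb_low n τ (show 1 ≤ 2*n+1+1-i by omega) (show 2*n+1+1-i ≤ n by omega),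
        show 2*n+1+1-i = 2*n+2-i by omega]
    omega

lemma pval_emb_low_bounds (n : ℕ) (τ : Equiv.Perm (Fin n)) {i : ℕ} (h1 : 1 ≤ i) (h2 : i ≤ n) :
    n + 2 ≤ pval (emb n τ) i ∧ pval (emb n τ) i ≤ 2*n+1 := by
  have := pval_pos τ h1 h2
  have := pval_le τ h1 h2
  rw [pval_emb_low n τ h1 h2]
  omega

lemma pval_emb_high_bounds (n : ℕ) (τ : Equiv.Perm (Fin n)) {i : ℕ} (h1 : n+2 ≤ i) (h2 : i ≤ 2*n+1) :
    1 ≤ pval (emb n τ) i ∧ pval (emb n τ) i ≤ n := by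
  have hj1 : 1 ≤ 2*n+2-i := by omega
  have hj2 : 2*n+2-i ≤ n := by omega
  have := pval_pos τ hj1 hj2
  have := pval_le τ hj1 hj2
  rw [pval_emb_high n τ h1 h2]
  omega

/-- If positions p < q have increasing values in `emb n τ`, they are in the same block. -/
lemma emb_same_block (n : ℕ) (τ : Equiv.Perm (Fin n)) {p q : ℕ} (h1 : 1 ≤ p) (h2 : p < q)
    (h3 : q ≤ 2*n+1) (h : pval (emb n τ) p < pval (emb n τ) q) :
    q ≤ n ∨ (n + 2 ≤ p) := by
  by_contra hc
  push_neg at hc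
  obtain ⟨hq, hp⟩ := hc
  -- p ≤ n+1 and q ≥ n+1
  rcases show p ≤ n ∨ p = n+1 by omega with hpn | hpn
  · have hlow := pval_emb_low_bounds n τ h1 hpn
    rcases show q = n+1 ∨ n+2 ≤ q by omega with hqn | hqn
    · rw [hqn, pval_emb_mid] at h; omega
    · have hhigh := pval_emb_high_bounds n τ hqn h3; omega
  · have hq2 : n+2 ≤ q := by omega
    have hhigh := pval_emb_high_bounds n τ hq2 h3
    rw [hpn, pval_emb_mid] at h; omega

lemma avoids_emb (n : ℕ) (τ : Equiv.Perm (Fin n)) (hA : Avoids123 τ) :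
    Avoids123 (emb n τ) := by
  rintro ⟨i, j, k, h1, h2, h3, h4, h5, h6⟩
  have b1 := emb_same_block n τ h1 h2 (by omega) h5
  have b2 := emb_same_block n τ (by omega) h3 h4 h6
  rcases b1 with hb1 | hb1
  · rcases b2 with hb2 | hb2
    · -- all in low block
      apply hA
      refine ⟨i, j, k, h1, h2, h3, hb2, ?_, ?_⟩
      · rw [pval_emb_low n τ (i:=i) h1 (by omega), pval_emb_low n τ (i:=j) (by omega) hb1] at h5
        omega
      · rw [pval_emb_low n τ (i:=j) (by omega) hb1, pval_emb_low n τ (i:=k) (by omega) hb2] at h6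
        omega
    · omega
  · -- i ≥ n+2, hence j, k ≥ n+2 too
    have hj : n + 2 ≤ j := by omega
    have hk : n + 2 ≤ k := by omega
    apply hA
    refine ⟨2*n+2-k, 2*n+2-j, 2*n+2-i, by omega, by omega, by omega, by omega, ?_, ?_⟩
    · rw [pval_emb_high n τ hj (by omega), pval_emb_high n τ hk h4] at h6
      have := pval_pos τ (show 1 ≤ 2*n+2-j by omega) (show 2*n+2-j ≤ n by omega)
      have := pval_le τ (show 1 ≤ 2*n+2-j by omega) (show 2*n+2-j ≤ n by omega)
      have := pval_pos τ (show 1 ≤ 2*n+2-k by omega) (show 2*n+2-k ≤ n by omega)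
      have := pval_le τ (show 1 ≤ 2*n+2-k by omega) (show 2*n+2-k ≤ n by omega)
      omega
    · rw [pval_emb_high n τ hb1 (by omega), pval_emb_high n τ hj (by omega)] at h5
      have := pval_pos τ (show 1 ≤ 2*n+2-j by omega) (show 2*n+2-j ≤ n by omega)
      have := pval_le τ (show 1 ≤ 2*n+2-j by omega) (show 2*n+2-j ≤ n by omega)
      have := pval_pos τ (show 1 ≤ 2*n+2-i by omega) (show 2*n+2-i ≤ n by omega)
      have := pval_le τ (show 1 ≤ 2*n+2-i by omega) (show 2*n+2-i ≤ n by omega)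
      omega

lemma avoids_of_emb (n : ℕ) (τ : Equiv.Perm (Fin n)) (hA : Avoids123 (emb n τ)) :
    Avoids123 τ := by
  rintro ⟨i, j, k, h1, h2, h3, h4, h5, h6⟩
  apply hA
  refine ⟨i, j, k, h1, h2, h3, by omega, ?_, ?_⟩
  · rw [pval_emb_low n τ (i:=i) h1 (by omega), pval_emb_low n τ (i:=j) (by omega) (by omega)]
    omega
  · rw [pval_emb_low n τ (i:=j) (by omega) (by omega), pval_emb_low n τ (i:=k) (by omega) h4]
    omega

lemma des_eq_card {N : ℕ} (σ : Equiv.Perm (Fin N)) :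
    des σ = ((Finset.Icc 1 (N-1)).filter (fun i => pval σ (i+1) < pval σ i)).card := by
  rw [des]
  rw [Nat.card_congr (Equiv.subtypeEquivRight (q := fun i =>
      i ∈ (Finset.Icc 1 (N-1)).filter (fun i => pval σ (i+1) < pval σ i)) ?_)]
  · rw [Nat.card_eq_fintype_card, Fintype.card_coe]
  · intro i
    simp only [Finset.mem_filter, Finset.mem_Icc]
    constructor
    · rintro ⟨a, b, c⟩; exact ⟨⟨a, by omega⟩, c⟩
    · rintro ⟨⟨a, b⟩, c⟩; exact ⟨a, by omega, c⟩

lemma des_emb (n : ℕ) (hn : 1 ≤ n) (τ : Equiv.Perm (Fin n)) :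
    des (emb n τ) = 2 * des τ + 2 := by
  classical
  rw [des_eq_card, des_eq_card]
  set D : Finset ℕ := (Finset.Icc 1 (n-1)).filter (fun i => pval τ (i+1) < pval τ i) with hD
  have hDsub : ∀ j ∈ D, 1 ≤ j ∧ j ≤ n - 1 := by
    intro j hj
    simp only [hD, Finset.mem_filter, Finset.mem_Icc] at hj
    exact ⟨hj.1.1, hj.1.2⟩
  have hmain : ((Finset.Icc 1 (2*n+1-1)).filter (fun i => pval (emb n τ) (i+1) < pval (emb n τ) i))
      = (D ∪ ({n, n+1} ∪ D.image (fun j => 2*n+1-j))) := by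
    ext i
    simp only [Finset.mem_filter, Finset.mem_Icc, Finset.mem_union, Finset.mem_insert,
      Finset.mem_singleton, Finset.mem_image]
    constructor
    · rintro ⟨⟨ha, hb⟩, hc⟩
      rcases show i ≤ n-1 ∨ i = n ∨ i = n+1 ∨ (n+2 ≤ i ∧ i ≤ 2*n) by omega with h | h | h | h
      · left
        rw [pval_emb_low n τ (i:=i) ha (by omega),
            pval_emb_low n τ (i:=i+1) (by omega) (by omega)] at hc
        simp only [hD, Finset.mem_filter, Finset.mem_Icc]
        exact ⟨⟨ha, h⟩, by omega⟩
      · right; left; left; exact h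
      · right; left; right; exact h
      · right; right
        refine ⟨2*n+1-i, ?_, by omega⟩
        rw [pval_emb_high n τ (i:=i) h.1 (by omega),
            pval_emb_high n τ (i:=i+1) (by omega) (by omega)] at hc
        have e1 : 2*n+2-(i+1) = 2*n+1-i := by omega
        have e2 : 2*n+2-i = (2*n+1-i)+1 := by omega
        rw [e1, e2] at hc
        have := pval_le τ (show 1 ≤ 2*n+1-i by omega) (show 2*n+1-i ≤ n by omega)
        have := pval_pos τ (show 1 ≤ (2*n+1-i)+1 by omega) (show (2*n+1-i)+1 ≤ n by omega)
        have := pval_le τ (show 1 ≤ (2*n+1-i)+1 by omega) (show (2*n+1-i)+1 ≤ n by omega)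
        simp only [hD, Finset.mem_filter, Finset.mem_Icc]
        exact ⟨⟨by omega, by omega⟩, by omega⟩
    · have hp1 := pval_pos τ (le_refl 1) hn
      have hpn1 := pval_pos τ hn (le_refl n)
      have hpnle := pval_le τ hn (le_refl n)
      rintro (h | (h | h) | ⟨j, hj, hj2⟩)
      · have hjb := hDsub i h
        simp only [hD, Finset.mem_filter, Finset.mem_Icc] at h
        refine ⟨⟨hjb.1, by omega⟩, ?_⟩
        rw [pval_emb_low n τ (i:=i) hjb.1 (by omega),
            pval_emb_low n τ (i:=i+1) (by omega) (by omega)]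
        omega
      · refine ⟨⟨by omega, by omega⟩, ?_⟩
        rw [h, pval_emb_mid, pval_emb_low n τ (i:=n) hn (le_refl n)]
        omega
      · refine ⟨⟨by omega, by omega⟩, ?_⟩
        rw [h, pval_emb_mid, pval_emb_high n τ (i:=n+2) (by omega) (by omega),
            show 2*n+2-(n+2) = n by omega]
        omega
      · have hjb := hDsub j hj
        subst hj2
        simp only [hD, Finset.mem_filter, Finset.mem_Icc] at hj
        refine ⟨⟨by omega, by omega⟩, ?_⟩
        rw [pval_emb_high n τ (i:=2*n+1-j) (by omega) (by omega),
            pval_emb_high n τ (i:=2*n+1-j+1) (by omega) (by omega)]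
        have e1 : 2*n+2-(2*n+1-j+1) = j := by omega
        have e2 : 2*n+2-(2*n+1-j) = j+1 := by omega
        rw [e1, e2]
        have := pval_le τ (show 1 ≤ j by omega) (show j ≤ n by omega)
        have := pval_pos τ (show 1 ≤ j+1 by omega) (show j+1 ≤ n by omega)
        have := pval_le τ (show 1 ≤ j+1 by omega) (show j+1 ≤ n by omega)
        omega
  rw [hmain]
  have hdisj1 : Disjoint D ({n, n+1} ∪ D.image (fun j => 2*n+1-j)) := by
    rw [Finset.disjoint_left]
    intro a ha hb
    have h1 := hDsub a ha
    simp only [Finset.mem_union, Finset.mem_insert, Finset.mem_singleton, Finset.mem_image] at hb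
    rcases hb with (h | h) | ⟨j, hj, hj2⟩
    · omega
    · omega
    · have := hDsub j hj; omega
  have hdisj2 : Disjoint ({n, n+1} : Finset ℕ) (D.image (fun j => 2*n+1-j)) := by
    rw [Finset.disjoint_left]
    intro a ha hb
    simp only [Finset.mem_insert, Finset.mem_singleton] at ha
    simp only [Finset.mem_image] at hb
    obtain ⟨j, hj, hj2⟩ := hb
    have := hDsub j hj; omega
  rw [Finset.card_union_of_disjoint hdisj1, Finset.card_union_of_disjoint hdisj2,
      Finset.card_image_of_injOn (fun a ha b hb hab => by
        have := hDsub a ha; have := hDsub b hb; omega)]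
  have : ({n, n+1} : Finset ℕ).card = 2 := by
    rw [Finset.card_insert_of_notMem (by simp), Finset.card_singleton]
  rw [this]
  omega

section extract
variable {n : ℕ} (σ : Equiv.Perm (Fin (2*n+1)))

lemma centro_mid (hC : IsCentro σ) : pval σ (n+1) = n+1 := by
  have := hC (n+1) (by omega) (by omega)
  rw [show 2*n+1+1-(n+1) = n+1 by omega] at this
  omega

lemma centro_low (hC : IsCentro σ) (hA : Avoids123 σ) {i : ℕ} (h1 : 1 ≤ i) (h2 : i ≤ n) :
    n + 2 ≤ pval σ i := by
  by_contra hcon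
  push_neg at hcon
  have hmid := centro_mid σ hC
  have hne : pval σ i ≠ n + 1 := fun h => by
    have := pval_inj σ h1 (by omega) (by omega) (by omega) (h.trans hmid.symm); omega
  have hle : pval σ i ≤ n := by omega
  have hcent := hC i h1 (by omega)
  apply hA
  exact ⟨i, n+1, 2*n+1+1-i, h1, by omega, by omega, by omega, by omega, by omega⟩

lemma extract_mem {i : ℕ} (hC : IsCentro σ) (hA : Avoids123 σ) (h : i < n) :
    n + 1 ≤ (σ ⟨i, by omega⟩ : ℕ) ∧ (σ ⟨i, by omega⟩ : ℕ) < 2*n+1 := by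
  have := centro_low σ hC hA (i := i+1) (by omega) (by omega)
  rw [pval_def σ (show i+1-1 < 2*n+1 by omega)] at this
  have hlt := (σ ⟨i+1-1, by omega⟩).isLt
  simp only [show i+1-1 = i from rfl] at this hlt
  exact ⟨by omega, hlt⟩

noncomputable def extract (hC : IsCentro σ) (hA : Avoids123 σ) : Equiv.Perm (Fin n) :=
  Equiv.ofBijective (fun x => ⟨(σ ⟨(x:ℕ), by omega⟩ : ℕ) - (n+1), by
      have := extract_mem σ hC hA x.isLt; omega⟩)
    (Finite.injective_iff_bijective.mp (by
      intro a b hab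
      have ha := extract_mem σ hC hA a.isLt
      have hb := extract_mem σ hC hA b.isLt
      have hv := congrArg Fin.val hab
      simp only [Fin.val_mk] at hv
      have : σ ⟨(a:ℕ), by omega⟩ = σ ⟨(b:ℕ), by omega⟩ := Fin.ext (by omega)
      have h5 := congrArg Fin.val (σ.injective this)
      simp only [Fin.val_mk] at h5
      exact Fin.ext h5))

lemma pval_mk {N : ℕ} (σ : Equiv.Perm (Fin N)) (i : ℕ) (h : i < N) :
    pval σ (i+1) = (σ ⟨i, h⟩ : ℕ) + 1 := pval_def σ (show i+1-1 < N from h)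

lemma emb_extract (hC : IsCentro σ) (hA : Avoids123 σ) : emb n (extract σ hC hA) = σ := by
  apply Equiv.ext
  intro x
  apply Fin.ext
  rw [emb_apply]
  unfold embFun
  have hx := x.isLt
  split_ifs with h1 h2
  · -- x < n
    have hmem := extract_mem σ hC hA h1
    simp only [Fin.eta] at hmem
    simp only [extract, Equiv.ofBijective_apply, Fin.val_mk, Fin.eta]
    omega
  · -- x = n
    have hmid := centro_mid σ hC
    rw [pval_mk σ n (by omega)] at hmid
    have hxe : (⟨n, by omega⟩ : Fin (2*n+1)) = x := Fin.ext h2.symm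
    rw [hxe] at hmid
    simp only [Fin.val_mk]
    omega
  · -- x > n
    have hcent := hC ((x:ℕ)+1) (by omega) (by omega)
    rw [show 2*n+1+1-((x:ℕ)+1) = (2*n-(x:ℕ))+1 by omega] at hcent
    rw [pval_mk σ (x:ℕ) (by omega), pval_mk σ (2*n-(x:ℕ)) (by omega)] at hcent
    simp only [Fin.eta] at hcent
    have hmem := extract_mem σ hC hA (show 2*n - (x:ℕ) < n by omega)
    simp only [extract, Equiv.ofBijective_apply, Fin.val_mk, Fin.eta]
    omega

end extract

lemma emb_injective (n : ℕ) (τ₁ τ₂ : Equiv.Perm (Fin n)) (h : emb n τ₁ = emb n τ₂) :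
    τ₁ = τ₂ := by
  apply Equiv.ext
  intro x
  apply Fin.ext
  have hx := x.isLt
  have hp := congrArg (fun e => pval e ((x:ℕ)+1)) h
  rw [pval_emb_low n τ₁ (by omega) (by omega), pval_emb_low n τ₂ (by omega) (by omega),
      pval_mk τ₁ (x:ℕ) hx, pval_mk τ₂ (x:ℕ) hx] at hp
  simp only [Fin.eta] at hp
  omega

lemma des_of_mem {n : ℕ} (hn : 1 ≤ n) (σ : Equiv.Perm (Fin (2*n+1)))
    (hC : IsCentro σ) (hA : Avoids123 σ) :
    des σ = 2 * des (extract σ hC hA) + 2 := by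
  have := des_emb n hn (extract σ hC hA)
  rwa [emb_extract] at this

/-- for `n ≥ 1`, `d ≥ 0`, the number of permutations in `C_{2n+1}(123)`
with exactly `d` descents equals the number of 123-avoiding permutations of `{1,…,n}`
with exactly `(d−2)/2` descents if `d` is even and `d ≥ 2`, and equals `0` if `d` is
odd or `d = 0`. -/
theorem stmt19 (n d : ℕ) (hn : 1 ≤ n) :
    Nat.card {σ : Equiv.Perm (Fin (2 * n + 1)) // IsCentro σ ∧ Avoids123 σ ∧ des σ = d}
      = if d % 2 = 0 ∧ 2 ≤ d then
          Nat.card {τ : Equiv.Perm (Fin n) // Avoids123 τ ∧ des τ = (d - 2) / 2}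
        else 0 := by
  by_cases hd : d % 2 = 0 ∧ 2 ≤ d
  · rw [if_pos hd]
    apply Nat.card_congr
    refine ⟨fun s => ⟨extract s.1 s.2.1 s.2.2.1, ?_, ?_⟩,
        fun t => ⟨emb n t.1, centro_emb n t.1, avoids_emb n t.1 t.2.1, ?_⟩, ?_, ?_⟩
    · apply avoids_of_emb n
      rw [emb_extract]
      exact s.2.2.1
    · have h1 := des_of_mem hn s.1 s.2.1 s.2.2.1
      have h2 := s.2.2.2
      omega
    · rw [des_emb n hn]
      have := t.2.2
      omega
    · intro s
      exact Subtype.ext (emb_extract s.1 s.2.1 s.2.2.1)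
    · intro t
      exact Subtype.ext (emb_injective n _ _ (emb_extract (emb n t.1) (centro_emb n t.1) (avoids_emb n t.1 t.2.1)))
  · rw [if_neg hd]
    have : IsEmpty {σ : Equiv.Perm (Fin (2 * n + 1)) // IsCentro σ ∧ Avoids123 σ ∧ des σ = d} := by
      refine ⟨fun s => hd ?_⟩
      have h1 := des_of_mem hn s.1 s.2.1 s.2.2.1
      have h2 := s.2.2.2
      omega
    exact Nat.card_of_isEmpty
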